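/- arXiv:1409.2925 — 3 statements merged into one kernel-verified Lean document; each statement's English description precedes it below -/
import Mathlib

section
/- For a C² function u: ℝᴺ → ℝ with ∇u(x) ≠ 0, one has (1/2)(sup_{B_ε(x)} u + inf_{B_ε(x)} u) = u(x) + (ε²/2) Δ_∞ u(x) + o(ε²) as ε → 0, where Δ_∞ u(x) = ⟨∇²u(x) · (∇u(x)/|∇u(x)|), ∇u(x)/|∇u(x)|⟩. -/
open MeasureTheory Asymptotics Filter Topology

open Metric Pointwise

/-- The normalized infinity-Laplacian
`Δ_∞ u(x) = ⟨∇²u(x) (∇u/|∇u|), ∇u/|∇u|⟩` of `u` at `x`. -/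
noncomputable def infLap {N : ℕ} (u : EuclideanSpace ℝ (Fin N) → ℝ)
    (x : EuclideanSpace ℝ (Fin N)) : ℝ :=
  iteratedFDeriv ℝ 2 u x
    ![‖gradient u x‖⁻¹ • gradient u x, ‖gradient u x‖⁻¹ • gradient u x]

/-- Second-order Taylor expansion at a point, little-o form. -/
lemma taylor2 {E : Type*} [NormedAddCommGroup E] [NormedSpace ℝ E]
    (f : E → ℝ) (x : E) (hf : ContDiffAt ℝ 2 f x) :
    (fun h : E => f (x + h) - f x - fderiv ℝ f x h
      - fderiv ℝ (fderiv ℝ f) x h h / 2) =o[𝓝 (0 : E)] fun h => ‖h‖ ^ 2 := by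
  obtain ⟨s, hs, hcd⟩ := hf.contDiffOn le_rfl (by simp)
  obtain ⟨r0, hr0, hball⟩ := Metric.mem_nhds_iff.1 hs
  set f' := fderiv ℝ f with hf'def
  set f'' := fderiv ℝ f' x with hf''def
  have hdiff : ∀ y ∈ Metric.ball x r0, HasFDerivAt f (f' y) y := by
    intro y hy
    have h1 : ContDiffAt ℝ 2 f y :=
      hcd.contDiffAt (mem_nhds_iff.2 ⟨_, hball, Metric.isOpen_ball, hy⟩)
    exact (h1.differentiableAt two_ne_zero).hasFDerivAt
  have hf' : HasFDerivAt f' f'' x := by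
    have : ContDiffAt ℝ 1 f' x := hf.fderiv_right (m := 1) (by norm_num)
    exact (this.differentiableAt one_ne_zero).hasFDerivAt
  have hsymm : ∀ v w, f'' v w = f'' w v :=
    second_derivative_symmetric_of_eventually
      (Filter.eventually_of_mem (Metric.ball_mem_nhds x hr0) hdiff) hf'
  have hg : ∀ k : E, ‖k‖ < r0 → HasFDerivAt
      (fun h : E => f (x + h) - f x - f' x h - f'' h h / 2)
      (f' (x + k) - f' x - f'' k) k := by
    intro k hk
    have hk' : x + k ∈ Metric.ball x r0 := by
      simp only [Metric.mem_ball, dist_eq_norm, add_sub_cancel_left]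
      exact hk
    have h1 : HasFDerivAt (fun h : E => f (x + h)) (f' (x + k)) k := by
      have := (hdiff (x + k) hk').comp k ((hasFDerivAt_id k).const_add x)
      exact this
    have h2 : HasFDerivAt (fun h : E => f'' h h)
        ((f'' k).comp (ContinuousLinearMap.id ℝ E) + f''.flip k) k :=
      f''.hasFDerivAt.clm_apply (hasFDerivAt_id k)
    have h3 := ((h1.sub_const (f x)).sub ((f' x).hasFDerivAt)).sub (h2.mul_const (2⁻¹ : ℝ))
    convert h3 using 2
    · rfl
    · rfl
    · simp only [Pi.sub_apply]
      ring
    ext w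
    simp only [ContinuousLinearMap.coe_sub', Pi.sub_apply, ContinuousLinearMap.coe_comp',
      Function.comp_apply, ContinuousLinearMap.coe_id', id_eq,
      ContinuousLinearMap.add_apply, ContinuousLinearMap.coe_smul', Pi.smul_apply,
      ContinuousLinearMap.smul_apply, ContinuousLinearMap.flip_apply, smul_eq_mul]
    rw [hsymm w k]
    ring
  rw [Asymptotics.isLittleO_iff]
  intro c hc
  have hc2 : 0 < c / 2 := by positivity
  obtain ⟨r1, hr1, hball1⟩ := Metric.eventually_nhds_iff.1 (isLittleO_iff.1 hf'.isLittleO hc2)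
  set r := min r0 r1 with hrdef
  have hr : 0 < r := lt_min hr0 hr1
  filter_upwards [Metric.ball_mem_nhds (0 : E) hr] with h hh
  rw [mem_ball_zero_iff] at hh
  have key : ∀ k ∈ Metric.closedBall (0 : E) ‖h‖,
      ‖f' (x + k) - f' x - f'' k‖ ≤ c / 2 * ‖h‖ := by
    intro k hk
    rw [Metric.mem_closedBall, dist_zero_right] at hk
    have : dist (x + k) x < r1 := by
      rw [dist_eq_norm, add_sub_cancel_left]
      exact lt_of_le_of_lt hk (lt_of_lt_of_le hh (min_le_right _ _))
    have hb := hball1 this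
    rw [add_sub_cancel_left] at hb
    calc ‖f' (x + k) - f' x - f'' k‖ ≤ c / 2 * ‖k‖ := hb
      _ ≤ c / 2 * ‖h‖ := by gcongr
  have hmv := Convex.norm_image_sub_le_of_norm_hasFDerivWithin_le
    (f := fun h : E => f (x + h) - f x - f' x h - f'' h h / 2)
    (f' := fun k => f' (x + k) - f' x - f'' k) (s := Metric.closedBall (0 : E) ‖h‖)
    (fun k hk => by
      refine ((hg k ?_).hasFDerivWithinAt)
      rw [Metric.mem_closedBall, dist_zero_right] at hk
      exact lt_of_le_of_lt hk (lt_of_lt_of_le hh (min_le_left _ _)))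
    key (convex_closedBall _ _) (Metric.mem_closedBall_self (norm_nonneg h))
    (by rw [Metric.mem_closedBall, dist_zero_right])
  simp only [add_zero, map_zero, ContinuousLinearMap.zero_apply, sub_zero, sub_self,
    zero_div, zero_sub, norm_neg] at hmv
  have : ‖f (x + h) - f x - f' x h - f'' h h / 2‖ ≤ c / 2 * ‖h‖ * ‖h‖ := by
    simpa using hmv
  calc ‖f (x + h) - f x - f' x h - f'' h h / 2‖ ≤ c / 2 * ‖h‖ * ‖h‖ := this
    _ ≤ c * ‖‖h‖ ^ 2‖ := by
        rw [Real.norm_of_nonneg (by positivity)]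
        nlinarith [norm_nonneg h]

-- One-sided expansion of the supremum over small closed balls.
set_option maxHeartbeats 1000000 in
lemma sup_expansion {N : ℕ} (u : EuclideanSpace ℝ (Fin N) → ℝ)
    (x : EuclideanSpace ℝ (Fin N)) (hu : ContDiffAt ℝ 2 u x) (hgrad : gradient u x ≠ 0) :
    (fun ε : ℝ => sSup (u '' Metric.closedBall x ε) - u x - ε * ‖gradient u x‖
      - ε ^ 2 / 2 * infLap u x) =o[𝓝[>] (0 : ℝ)] fun ε => ε ^ 2 := by
  set p := gradient u x with hpdef
  have hp : 0 < ‖p‖ := norm_pos_iff.2 hgrad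
  set ν : EuclideanSpace ℝ (Fin N) := ‖p‖⁻¹ • p with hνdef
  have hν : ‖ν‖ = 1 := by
    rw [hνdef, norm_smul, norm_inv, norm_norm, inv_mul_cancel₀ hp.ne']
  set f'' := fderiv ℝ (fderiv ℝ u) x with hf''def
  set M := ‖f''‖ with hMdef
  have hM : 0 ≤ M := norm_nonneg f''
  set L := infLap u x with hLdef
  have hL : L = f'' ν ν := by
    rw [hLdef, infLap, iteratedFDeriv_two_apply]
    simp [hνdef, hpdef, hf''def]
  -- fderiv as inner ℝ product with the gradient
  have key : ∀ h, fderiv ℝ u x h = inner ℝ p h := by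
    intro h
    rw [hpdef]
    exact (InnerProductSpace.toDual_symm_apply).symm
  have hT : (fun h => u (x + h) - u x - inner ℝ p h - f'' h h / 2)
      =o[𝓝 (0 : EuclideanSpace ℝ (Fin N))] fun h => ‖h‖ ^ 2 := by
    have := taylor2 u x hu
    simp only [key] at this
    exact this
  -- bilinear bound
  have hbil : ∀ v w : EuclideanSpace ℝ (Fin N), |f'' v w| ≤ M * ‖v‖ * ‖w‖ := by
    intro v w
    calc |f'' v w| ≤ ‖f'' v‖ * ‖w‖ := (f'' v).le_opNorm w
      _ ≤ M * ‖v‖ * ‖w‖ := by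
          have := f''.le_opNorm v
          gcongr
  -- inner ℝ products with ν
  have hpν : (inner ℝ p ν : ℝ) = ‖p‖ := by
    rw [hνdef, real_inner_smul_right, real_inner_self_eq_norm_mul_norm]
    field_simp
  have hpeq : p = ‖p‖ • ν := by rw [hνdef, smul_smul, mul_inv_cancel₀ hp.ne', one_smul]
  -- continuity neighborhood
  obtain ⟨s, hs, hcd⟩ := hu.contDiffOn le_rfl (by simp)
  obtain ⟨r2, hr2, hball2⟩ := Metric.mem_nhds_iff.1 hs
  rw [Asymptotics.isLittleO_iff]
  intro δ hδ
  have hδ2 : 0 < δ / 2 := by positivity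
  obtain ⟨r1, hr1, hball1⟩ := Metric.eventually_nhds_iff.1 (isLittleO_iff.1 hT hδ2)
  set τ := min (min r1 r2) (‖p‖ * δ / (M ^ 2 + 1)) with hτdef
  have hτ : 0 < τ := by
    apply lt_min (lt_min hr1 hr2)
    positivity
  filter_upwards [Ioo_mem_nhdsGT_of_mem (Set.left_mem_Ico.2 hτ)] with ε hε
  obtain ⟨hε0, hετ⟩ := hε
  have hεr1 : ε < r1 := lt_of_lt_of_le hετ (le_trans (min_le_left _ _) (min_le_left _ _))
  have hεr2 : ε < r2 := lt_of_lt_of_le hετ (le_trans (min_le_left _ _) (min_le_right _ _))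
  have hεM : ε * (M ^ 2 + 1) ≤ ‖p‖ * δ := by
    have : ε ≤ ‖p‖ * δ / (M ^ 2 + 1) := le_of_lt (lt_of_lt_of_le hετ (min_le_right _ _))
    rw [le_div_iff₀ (by positivity)] at this
    exact this
  -- Taylor remainder bound for ‖h‖ ≤ ε
  have hR : ∀ h : EuclideanSpace ℝ (Fin N), ‖h‖ ≤ ε →
      |u (x + h) - u x - inner ℝ p h - f'' h h / 2| ≤ δ / 2 * ε ^ 2 := by
    intro h hh
    have : dist h 0 < r1 := by rw [dist_zero_right]; exact lt_of_le_of_lt hh hεr1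
    have hb := hball1 this
    rw [Real.norm_eq_abs] at hb
    calc |u (x + h) - u x - inner ℝ p h - f'' h h / 2| ≤ δ / 2 * ‖‖h‖ ^ 2‖ := hb
      _ ≤ δ / 2 * ε ^ 2 := by
          rw [Real.norm_of_nonneg (by positivity)]
          gcongr
  have hcont : ContinuousOn u (Metric.closedBall x ε) := by
    apply (hcd.continuousOn).mono
    intro y hy
    apply hball2
    rw [Metric.mem_closedBall] at hy
    rw [Metric.mem_ball]
    exact lt_of_le_of_lt hy hεr2
  have hcomp : IsCompact (Metric.closedBall x ε) := isCompact_closedBall x ε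
  have hne : (Metric.closedBall x ε).Nonempty := ⟨x, Metric.mem_closedBall_self hε0.le⟩
  obtain ⟨z, hz, hmax⟩ := hcomp.exists_isMaxOn hne hcont
  have hsup : sSup (u '' Metric.closedBall x ε) = u z := by
    apply IsGreatest.csSup_eq
    exact ⟨⟨z, hz, rfl⟩, by rintro _ ⟨y, hy, rfl⟩; exact hmax hy⟩
  have hbdd : BddAbove (u '' Metric.closedBall x ε) :=
    (hcomp.image_of_continuousOn hcont).bddAbove
  -- the point εν
  have hεν_mem : x + ε • ν ∈ Metric.closedBall x ε := by
    rw [Metric.mem_closedBall, dist_eq_norm, add_sub_cancel_left, norm_smul, hν,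
      Real.norm_of_nonneg hε0.le, mul_one]
  have hεν_norm : ‖ε • ν‖ = ε := by
    rw [norm_smul, hν, Real.norm_of_nonneg hε0.le, mul_one]
  -- value at εν
  have hQν : f'' (ε • ν) (ε • ν) = ε ^ 2 * (f'' ν ν) := by
    simp only [_root_.map_smul, ContinuousLinearMap.smul_apply, smul_eq_mul]
    ring
  have hiν : (inner ℝ p (ε • ν) : ℝ) = ε * ‖p‖ := by
    rw [real_inner_smul_right, hpν]
  have hlow : -(δ * ε ^ 2) ≤ sSup (u '' Metric.closedBall x ε) - u x - ε * ‖p‖ - ε ^ 2 / 2 * L := by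
    have h1 : u (x + ε • ν) ≤ sSup (u '' Metric.closedBall x ε) :=
      le_csSup hbdd ⟨_, hεν_mem, rfl⟩
    have h2 := hR (ε • ν) (le_of_eq hεν_norm)
    rw [hiν, hQν, abs_le] at h2
    rw [hL]
    have h3 : δ / 2 * ε ^ 2 ≤ δ * ε ^ 2 := by nlinarith [sq_nonneg ε]
    have h4 : ε ^ 2 * (f'' ν ν) / 2 = ε ^ 2 / 2 * (f'' ν ν) := by ring
    linarith [h2.1]
  -- upper bound
  set h₀ := z - x with hh₀def
  have hzx : z = x + h₀ := by rw [hh₀def]; abel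
  have hh₀ : ‖h₀‖ ≤ ε := by
    rw [hh₀def, ← dist_eq_norm]
    exact Metric.mem_closedBall.1 hz
  set t : ℝ := inner ℝ ν h₀ with htdef
  have hpt : (inner ℝ p h₀ : ℝ) = ‖p‖ * t := by
    conv_lhs => rw [hpeq]
    rw [real_inner_smul_left, htdef]
  set r := ‖h₀ - ε • ν‖ with hrdef
  have hr0 : 0 ≤ r := norm_nonneg _
  have hrsq : r ^ 2 = ‖h₀‖ ^ 2 - 2 * (ε * t) + ε ^ 2 := by
    rw [hrdef, @norm_sub_sq_real, real_inner_smul_right, real_inner_comm, ← htdef, hεν_norm]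
  have hC : 2 * ε * t ≤ 2 * ε ^ 2 - r ^ 2 := by
    have := mul_self_le_mul_self (norm_nonneg h₀) hh₀
    nlinarith [hrsq]
  have hQdiff : f'' h₀ h₀ ≤ ε ^ 2 * (f'' ν ν) + 2 * M * ε * r := by
    have e1 : f'' h₀ h₀ - f'' (ε • ν) (ε • ν) = f'' (h₀ - ε • ν) h₀ + f'' (ε • ν) (h₀ - ε • ν) := by
      simp only [_root_.map_sub, ContinuousLinearMap.sub_apply]
      ring
    have b1 := (abs_le.1 (hbil (h₀ - ε • ν) h₀)).2
    have b2 := (abs_le.1 (hbil (ε • ν) (h₀ - ε • ν))).2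
    rw [← hrdef] at b1 b2
    rw [hεν_norm] at b2
    have b1' : M * r * ‖h₀‖ ≤ M * r * ε :=
      mul_le_mul_of_nonneg_left hh₀ (mul_nonneg hM hr0)
    linarith [e1, b1, b2, hQν]
  have hup : sSup (u '' Metric.closedBall x ε) - u x - ε * ‖p‖ - ε ^ 2 / 2 * L ≤ δ * ε ^ 2 := by
    rw [hsup, hzx, hL]
    have hA := (abs_le.1 (hR h₀ hh₀)).2
    rw [hpt] at hA
    -- multiply everything by 2 ε ‖p‖ > 0
    have key2 : 2 * ε * ‖p‖ * (u (x + h₀) - u x - ε * ‖p‖ - ε ^ 2 / 2 * f'' ν ν)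
        ≤ 2 * ε * ‖p‖ * (δ * ε ^ 2) := by
      have hD := sq_nonneg (‖p‖ * r - M * ε ^ 2)
      have hE : ε ^ 3 * (ε * (M ^ 2 + 1)) ≤ ε ^ 3 * (‖p‖ * δ) := by
        apply mul_le_mul_of_nonneg_left hεM (by positivity)
      have hCp : (‖p‖ * ‖p‖) * (2 * ε * t) ≤ (‖p‖ * ‖p‖) * (2 * ε ^ 2 - r ^ 2) :=
        mul_le_mul_of_nonneg_left hC (by positivity)
      have hD' : 2 * (‖p‖ * r) * (M * ε ^ 2) ≤ (‖p‖ * r) ^ 2 + (M * ε ^ 2) ^ 2 :=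
        two_mul_le_add_sq _ _
      linarith [mul_le_mul_of_nonneg_left hA (by positivity : (0:ℝ) ≤ 2 * ε * ‖p‖),
        mul_le_mul_of_nonneg_left hQdiff (by positivity : (0:ℝ) ≤ ε * ‖p‖),
        hCp, hD', hE, sq_nonneg (ε ^ 2)]
    have hpos : (0:ℝ) < 2 * ε * ‖p‖ := by positivity
    exact le_of_mul_le_mul_left key2 hpos
  rw [Real.norm_eq_abs, Real.norm_of_nonneg (by positivity : (0:ℝ) ≤ ε ^ 2), abs_le]
  constructor
  · linarith
  · linarith

/-- Expansion of the midrange of a C² function with nonvanishing gradient: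
`(sup_{B_ε(x)} u + inf_{B_ε(x)} u)/2 = u(x) + ε²/2 Δ_∞u(x) + o(ε²)` as `ε → 0⁺`. -/
theorem midrange_expansion {N : ℕ} (hN : 1 ≤ N)
    (u : EuclideanSpace ℝ (Fin N) → ℝ) (x : EuclideanSpace ℝ (Fin N))
    (hu : ContDiffAt ℝ 2 u x) (hgrad : gradient u x ≠ 0) :
    (fun ε : ℝ =>
        (1 / 2) * (sSup (u '' Metric.closedBall x ε) + sInf (u '' Metric.closedBall x ε))
          - u x - ε ^ 2 / 2 * infLap u x)
      =o[𝓝[>] (0 : ℝ)] fun ε => ε ^ 2 := by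
  have hfneg : fderiv ℝ (-u) x = -fderiv ℝ u x := by
    rw [show (-u : EuclideanSpace ℝ (Fin N) → ℝ) = fun y => -u y from rfl, fderiv_fun_neg]
  have hgneg : gradient (-u) x = -gradient u x := by
    simp only [gradient, hfneg, map_neg]
  have hLneg : infLap (-u) x = -infLap u x := by
    set ν : EuclideanSpace ℝ (Fin N) := ‖gradient u x‖⁻¹ • gradient u x with hνdef
    have hνeq : ‖gradient (-u) x‖⁻¹ • gradient (-u) x = -ν := by
      rw [hgneg, norm_neg, smul_neg, hνdef]
    rw [infLap, infLap, hνeq, ← hνdef]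
    have harr : ![-ν, -ν] = fun i => (-1 : ℝ) • ![ν, ν] i := by
      funext i; fin_cases i <;> simp
    rw [harr]
    have := ContinuousMultilinearMap.map_smul_univ (iteratedFDeriv ℝ 2 (-u) x)
      (fun _ : Fin 2 => (-1 : ℝ)) ![ν, ν]
    rw [this]
    simp [iteratedFDeriv_neg_apply, Fin.prod_univ_two]
  have h1 := sup_expansion u x hu hgrad
  have h2 := sup_expansion (-u) x hu.neg (by rw [hgneg]; simpa using hgrad)
  have h3 := (h1.sub h2).const_mul_left (1 / 2 : ℝ)
  refine h3.congr' (Eventually.of_forall fun ε => ?_) EventuallyEq.rfl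
  have himg : (-u) '' Metric.closedBall x ε = -(u '' Metric.closedBall x ε) := by
    rw [← Set.image_neg_eq_neg, ← Set.image_comp]
    rfl
  have hsInf : sSup ((-u) '' Metric.closedBall x ε) = -sInf (u '' Metric.closedBall x ε) := by
    rw [himg, Real.sInf_def, neg_neg]
  beta_reduce
  rw [hsInf, hgneg, norm_neg, hLneg]
  simp only [Pi.neg_apply]
  ring
end

section
/- Suppose u_ε : ℝᴺ → ℝ is bounded and satisfies the p-harmonious mean value property u_ε(x) = (α/2)(sup_{B_ε(x)} u_ε + inf_{B_ε(x)} u_ε) + β ⨍_{B_ε(x)} u_ε for all x ∈ Ω, with α, β ≥ 0, α + β = 1. If Player II uses a strategy σ̄_II satisfying u_ε(σ̄_II(x_0,…,x_n)) ≤ inf_{B_ε(x_n)} u_ε + η/2^{n+1}, then for any strategy σ_I of Player I, the sequence M_n = u_ε(x_n) + η/2ⁿ is a supermartingale under P^{x_0}_{σ_I, σ̄_II}. -/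
open MeasureTheory

/-- The supermartingale property in the Tug-of-War game with noise.
`u` is bounded and p-harmonious: `u(x) = (α/2)(sup_{B_ε(x)} u + inf_{B_ε(x)} u) + β ⨍_{B_ε(x)} u`.
The token process `X` under `P^{x₀}_{σ_I, σ̄_II}` moves, conditionally on the history
`(x₀,…,x_n)`, to Player I's choice `σ_I(x₀,…,x_n)` with probability `α/2`, to Player II's
choice `σ̄_II(x₀,…,x_n)` with probability `α/2`, and uniformly in `B_ε(x_n)` with
probability `β`; both players move within `B_ε(x_n)` and Player II plays almost optimally:
`u(σ̄_II(x₀,…,x_n)) ≤ inf_{B_ε(x_n)} u + η/2^{n+1}`.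
Then `M_n = u(X_n) + η/2ⁿ` is a supermartingale. -/
theorem tug_of_war_supermartingale {N : ℕ} (hN : 1 ≤ N)
    {Θ : Type*} {m : MeasurableSpace Θ} (μ : Measure Θ) [IsProbabilityMeasure μ]
    (ℱ : Filtration ℕ m)
    (ε η α β : ℝ) (hε : 0 < ε) (hη : 0 < η)
    (hα : 0 ≤ α) (hβ : 0 ≤ β) (hαβ : α + β = 1)
    (u : EuclideanSpace ℝ (Fin N) → ℝ) (hub : ∃ C : ℝ, ∀ x, |u x| ≤ C)
    (X : ℕ → Θ → EuclideanSpace ℝ (Fin N))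
    (σI σII : (n : ℕ) → (Fin (n + 1) → EuclideanSpace ℝ (Fin N)) → EuclideanSpace ℝ (Fin N))
    -- the p-harmonious mean value property of `u`
    (hMVP : ∀ x, u x = α / 2 * (sSup (u '' Metric.ball x ε) + sInf (u '' Metric.ball x ε))
        + β * ⨍ y in Metric.ball x ε, u y)
    -- both players move the token within distance `ε`
    (hσI : ∀ n (h : Fin (n + 1) → EuclideanSpace ℝ (Fin N)),
      σI n h ∈ Metric.ball (h (Fin.last n)) ε)
    (hσII : ∀ n (h : Fin (n + 1) → EuclideanSpace ℝ (Fin N)),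
      σII n h ∈ Metric.ball (h (Fin.last n)) ε)
    -- Player II's strategy is almost optimal
    (hopt : ∀ n (h : Fin (n + 1) → EuclideanSpace ℝ (Fin N)),
      u (σII n h) ≤ sInf (u '' Metric.ball (h (Fin.last n)) ε) + η / 2 ^ (n + 1))
    -- the process `u(X_n)` is adapted and integrable
    (hadp : Adapted ℱ fun n ω => u (X n ω))
    (hint : ∀ n, Integrable (fun ω => u (X n ω)) μ)
    -- the game dynamics: one-step conditional expectation given the history
    (hgame : ∀ n, μ[(fun ω => u (X (n + 1) ω)) | ℱ n]
        =ᵐ[μ] fun ω => α / 2 * u (σI n fun i => X i ω) + α / 2 * u (σII n fun i => X i ω)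
          + β * ⨍ y in Metric.ball (X n ω) ε, u y) :
    Supermartingale (fun n ω => u (X n ω) + η / 2 ^ n) ℱ μ := by
  obtain ⟨C, hC⟩ := hub
  refine supermartingale_nat ?_ ?_ ?_
  · intro n
    exact ((hadp n).add measurable_const).stronglyMeasurable
  · intro n
    exact (hint n).add (integrable_const _)
  · intro n
    have hcond : μ[(fun ω => u (X (n + 1) ω) + η / 2 ^ (n + 1)) | ℱ n]
        =ᵐ[μ] fun ω => (μ[(fun ω => u (X (n + 1) ω)) | ℱ n]) ω + η / 2 ^ (n + 1) := by
      have := condExp_add (μ := μ) (m := ℱ n) (hint (n + 1))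
        (integrable_const (η / 2 ^ (n + 1)))
      refine this.trans ?_
      rw [condExp_const (ℱ.le n) (η / 2 ^ (n + 1)) (μ := μ)]
      rfl
    have hmid : μ[(fun ω => u (X (n + 1) ω) + η / 2 ^ (n + 1)) | ℱ n]
        =ᵐ[μ] fun ω => α / 2 * u (σI n fun i => X i ω) + α / 2 * u (σII n fun i => X i ω)
          + β * (⨍ y in Metric.ball (X n ω) ε, u y) + η / 2 ^ (n + 1) := by
      refine hcond.trans ?_
      filter_upwards [hgame n] with ω hω
      rw [hω]
    refine hmid.trans_le ?_
    filter_upwards with ω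
    set h : Fin (n + 1) → EuclideanSpace ℝ (Fin N) := fun i => X i ω with hh
    have hx : h (Fin.last n) = X n ω := rfl
    have hbdd : BddAbove (u '' Metric.ball (X n ω) ε) := by
      refine ⟨C, ?_⟩
      rintro _ ⟨y, -, rfl⟩
      exact (abs_le.mp (hC y)).2
    have hI : u (σI n h) ≤ sSup (u '' Metric.ball (X n ω) ε) := by
      refine le_csSup hbdd ⟨σI n h, ?_, rfl⟩
      rw [← hx]; exact hσI n h
    have hII : u (σII n h) ≤ sInf (u '' Metric.ball (X n ω) ε) + η / 2 ^ (n + 1) := by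
      have := hopt n h
      rwa [hx] at this
    have hα1 : α ≤ 1 := by linarith
    have hMVPx := hMVP (X n ω)
    have h2 : η / 2 ^ n = 2 * (η / 2 ^ (n + 1)) := by
      field_simp; ring
    have hpos : 0 < η / 2 ^ (n + 1) := by positivity
    have key : α / 2 * u (σI n h) + α / 2 * u (σII n h)
        + β * (⨍ y in Metric.ball (X n ω) ε, u y) + η / 2 ^ (n + 1)
        ≤ u (X n ω) + η / 2 ^ n := by
      rw [hMVPx, h2]
      have hαI : α / 2 * u (σI n h) ≤ α / 2 * sSup (u '' Metric.ball (X n ω) ε) := by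
        apply mul_le_mul_of_nonneg_left hI; linarith
      have hαII : α / 2 * u (σII n h)
          ≤ α / 2 * sInf (u '' Metric.ball (X n ω) ε) + α / 2 * (η / 2 ^ (n + 1)) := by
        have := mul_le_mul_of_nonneg_left hII (by linarith : (0:ℝ) ≤ α / 2)
        linarith [this, mul_add (α / 2) (sInf (u '' Metric.ball (X n ω) ε)) (η / 2 ^ (n + 1))]
      have hδ : α / 2 * (η / 2 ^ (n + 1)) ≤ η / 2 ^ (n + 1) := by nlinarith
      linarith [mul_add (α / 2) (sSup (u '' Metric.ball (X n ω) ε)) (sInf (u '' Metric.ball (X n ω) ε))]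
    exact key
end

section
/- If u_ε and v_ε are two bounded functions both satisfying the p-harmonious mean value property in Ω with β > 0, and u_ε ≤ v_ε on ℝᴺ ∖ Ω, then u_ε ≤ v_ε in Ω (comparison principle for p-harmonious functions). -/
open MeasureTheory Metric Filter Topology

theorem ball_int_cont {N : ℕ} (hN : 1 ≤ N) (ε : ℝ) (hε : 0 < ε)
    (w : EuclideanSpace ℝ (Fin N) → ℝ)
    (hwmeas : Measurable w) (C : ℝ) (hC : ∀ x, |w x| ≤ C) :
    Continuous (fun x : EuclideanSpace ℝ (Fin N) => ∫ y in ball x ε, w y) := by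
  haveI : Nonempty (Fin N) := ⟨⟨0, hN⟩⟩
  haveI : Nontrivial (EuclideanSpace ℝ (Fin N)) := by
    refine ⟨0, EuclideanSpace.single ⟨0, hN⟩ 1, fun h => ?_⟩
    have := congrArg (fun v : EuclideanSpace ℝ (Fin N) => v ⟨0, hN⟩) h.symm
    simp [EuclideanSpace.single] at this
  have hC0 : 0 ≤ C := (abs_nonneg _).trans (hC 0)
  set c : ℝ := (volume (ball (0 : EuclideanSpace ℝ (Fin N)) 1)).toReal with hc
  have hcnn : 0 ≤ c := ENNReal.toReal_nonneg
  have hint : ∀ (s : Set (EuclideanSpace ℝ (Fin N))), volume s ≠ ⊤ → IntegrableOn w s := by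
    intro s hs
    refine Integrable.mono' ((integrableOn_const hs : IntegrableOn (fun _ => C) s volume)) hwmeas.aestronglyMeasurable ?_
    filter_upwards with y using by simpa [Real.norm_eq_abs] using hC y
  -- volume of closed ball of radius ε + d
  have hvol : ∀ d : ℝ, 0 ≤ d →
      (volume (closedBall (0 : EuclideanSpace ℝ (Fin N)) (ε + d))).toReal = (ε + d) ^ N * c := by
    intro d hd
    rw [Measure.addHaar_closedBall _ _ (by linarith), finrank_euclideanSpace_fin,
      ENNReal.toReal_mul, ENNReal.toReal_ofReal (by positivity)]
  have hvolb : (volume (ball (0 : EuclideanSpace ℝ (Fin N)) ε)).toReal = ε ^ N * c := by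
    rw [Measure.addHaar_ball _ _ hε.le, finrank_euclideanSpace_fin,
      ENNReal.toReal_mul, ENNReal.toReal_ofReal (by positivity)]
  -- the key quantitative estimate
  have key : ∀ x x' : EuclideanSpace ℝ (Fin N),
      |(∫ y in ball x' ε, w y) - ∫ y in ball x ε, w y| ≤
        2 * C * (((ε + dist x' x) ^ N - ε ^ N) * c) := by
    intro x x'
    set d := dist x' x with hd
    have hd0 : 0 ≤ d := dist_nonneg
    -- ball x' ε \ ball x ε ⊆ closedBall x (ε+d) \ ball x ε, and symmetrically
    have hsub : ∀ z z' : EuclideanSpace ℝ (Fin N), dist z' z = d →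
        ball z' ε \ ball z ε ⊆ closedBall z (ε + d) \ ball z ε := by
      intro z z' hzz y hy
      refine ⟨?_, hy.2⟩
      have : dist y z' < ε := mem_ball.mp hy.1
      have : dist y z ≤ dist y z' + dist z' z := dist_triangle _ _ _
      exact mem_closedBall.mpr (by rw [hzz] at this; linarith [mem_ball.mp hy.1])
    have hmeasdiff : ∀ z : EuclideanSpace ℝ (Fin N),
        (volume (closedBall z (ε + d) \ ball z ε)).toReal ≤ ((ε + d) ^ N - ε ^ N) * c := by
      intro z
      have h1 : ball z ε ⊆ closedBall z (ε + d) :=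
        ball_subset_closedBall.trans (closedBall_subset_closedBall (by linarith))
      rw [measure_diff h1 measurableSet_ball.nullMeasurableSet measure_ball_lt_top.ne]
      have hfin : volume (closedBall z (ε + d)) ≠ ⊤ := measure_closedBall_lt_top.ne
      rw [ENNReal.toReal_sub_of_le (measure_mono h1) hfin]
      have e1 : (volume (closedBall z (ε + d))).toReal = (ε + d) ^ N * c := by
        rw [show volume (closedBall z (ε + d)) = volume (closedBall (0:EuclideanSpace ℝ (Fin N)) (ε + d)) by
          simp [Measure.addHaar_closedBall_center], hvol d hd0]
      have e2 : (volume (ball z ε)).toReal = ε ^ N * c := by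
        rw [Measure.addHaar_ball_center, hvolb]
      rw [e1, e2]; ring_nf; rfl
    have hfin' : ∀ z : EuclideanSpace ℝ (Fin N), volume (closedBall z (ε + d) \ ball z ε) ≠ ⊤ :=
      fun z => ((measure_mono Set.diff_subset).trans_lt measure_closedBall_lt_top).ne
    have e1 : (∫ y in ball x' ε, w y) =
        (∫ y in ball x' ε ∩ ball x ε, w y) + ∫ y in ball x' ε \ ball x ε, w y :=
      (integral_inter_add_diff measurableSet_ball (hint _ measure_ball_lt_top.ne)).symm
    have e2 : (∫ y in ball x ε, w y) =
        (∫ y in ball x' ε ∩ ball x ε, w y) + ∫ y in ball x ε \ ball x' ε, w y := by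
      rw [Set.inter_comm]
      exact (integral_inter_add_diff measurableSet_ball (hint _ measure_ball_lt_top.ne)).symm
    have best : ∀ z z' : EuclideanSpace ℝ (Fin N), dist z' z = d →
        |∫ y in ball z' ε \ ball z ε, w y| ≤ C * (((ε + d) ^ N - ε ^ N) * c) := by
      intro z z' hzz
      have h1 : |∫ y in ball z' ε \ ball z ε, w y| ≤
          C * (volume (ball z' ε \ ball z ε)).toReal := by
        have := norm_setIntegral_le_of_norm_le_const (μ := volume)
          (s := ball z' ε \ ball z ε) (f := w) (C := C)
          (((measure_mono Set.diff_subset).trans_lt measure_ball_lt_top))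
          (fun y _ => by simpa [Real.norm_eq_abs] using hC y)
        rw [← Real.norm_eq_abs]; exact this
      refine h1.trans ?_
      have hmono : (volume (ball z' ε \ ball z ε)).toReal ≤ ((ε + d) ^ N - ε ^ N) * c := by
        refine le_trans ?_ (hmeasdiff z)
        exact ENNReal.toReal_mono (hfin' z) (measure_mono (hsub z z' hzz))
      exact mul_le_mul_of_nonneg_left hmono hC0
    have : (∫ y in ball x' ε, w y) - (∫ y in ball x ε, w y)
        = (∫ y in ball x' ε \ ball x ε, w y) - (∫ y in ball x ε \ ball x' ε, w y) := by
      rw [e1, e2]; ring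
    rw [this]
    calc |(∫ y in ball x' ε \ ball x ε, w y) - (∫ y in ball x ε \ ball x' ε, w y)|
        ≤ |∫ y in ball x' ε \ ball x ε, w y| + |∫ y in ball x ε \ ball x' ε, w y| :=
          abs_sub _ _
      _ ≤ C * (((ε + d) ^ N - ε ^ N) * c) + C * (((ε + d) ^ N - ε ^ N) * c) := by
          exact add_le_add (best x x' rfl) (best x' x (by rw [dist_comm]))
      _ = 2 * C * (((ε + d) ^ N - ε ^ N) * c) := by ring
  -- conclude continuity by squeezing
  refine continuous_iff_continuousAt.mpr fun x => ?_
  rw [ContinuousAt, tendsto_iff_dist_tendsto_zero]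
  have hφ : Tendsto (fun x' : EuclideanSpace ℝ (Fin N) =>
      2 * C * (((ε + dist x' x) ^ N - ε ^ N) * c)) (𝓝 x) (𝓝 0) := by
    have hc1 : Continuous fun x' : EuclideanSpace ℝ (Fin N) =>
        2 * C * (((ε + dist x' x) ^ N - ε ^ N) * c) := by
      have hd : Continuous fun x' : EuclideanSpace ℝ (Fin N) => dist x' x :=
        continuous_id.dist continuous_const
      exact continuous_const.mul
        ((((continuous_const.add hd).pow N).sub continuous_const).mul continuous_const)
    have := hc1.tendsto x
    simpa using this
  refine squeeze_zero (fun x' => dist_nonneg) (fun x' => ?_) hφ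
  rw [Real.dist_eq]
  exact key x x'
theorem far_point {N : ℕ} (hN : 1 ≤ N) (r : ℝ) (hr : 0 ≤ r) :
    ∃ z : EuclideanSpace ℝ (Fin N), ‖z‖ = r :=
  ⟨EuclideanSpace.single ⟨0, hN⟩ r, by
    rw [EuclideanSpace.norm_single, Real.norm_eq_abs, abs_of_nonneg hr]⟩

/-- Comparison principle for p-harmonious functions: if bounded measurable `u` and `v`
both satisfy the p-harmonious mean value property in a bounded open `Ω` (with `β > 0`)
and `u ≤ v` outside `Ω`, then `u ≤ v` in `Ω`. -/
theorem p_harmonious_comparison {N : ℕ} (hN : 1 ≤ N)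
    (Ω : Set (EuclideanSpace ℝ (Fin N))) (hΩo : IsOpen Ω) (hΩb : Bornology.IsBounded Ω)
    (ε α β : ℝ) (hε : 0 < ε) (hα : 0 ≤ α) (hβ : 0 < β) (hαβ : α + β = 1)
    (u v : EuclideanSpace ℝ (Fin N) → ℝ)
    (humeas : Measurable u) (hvmeas : Measurable v)
    (hub : ∃ C : ℝ, ∀ x, |u x| ≤ C) (hvb : ∃ C : ℝ, ∀ x, |v x| ≤ C)
    (humvp : ∀ x ∈ Ω, u x = α / 2 * (sSup (u '' ball x ε) + sInf (u '' ball x ε))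
        + β * ⨍ y in ball x ε, u y)
    (hvmvp : ∀ x ∈ Ω, v x = α / 2 * (sSup (v '' ball x ε) + sInf (v '' ball x ε))
        + β * ⨍ y in ball x ε, v y)
    (hbdry : ∀ x ∉ Ω, u x ≤ v x) :
    ∀ x ∈ Ω, u x ≤ v x := by
  classical
  by_contra hcon
  push_neg at hcon
  obtain ⟨x₁, hx₁Ω, hx₁⟩ := hcon
  obtain ⟨Cu, hCu⟩ := hub
  obtain ⟨Cv, hCv⟩ := hvb
  haveI : Nonempty (Fin N) := ⟨⟨0, hN⟩⟩
  set w : EuclideanSpace ℝ (Fin N) → ℝ := fun x => u x - v x with hwdef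
  have hwmeas : Measurable w := humeas.sub hvmeas
  set C : ℝ := Cu + Cv with hCdef
  have hwb : ∀ x, |w x| ≤ C := fun x =>
    (abs_sub _ _).trans (add_le_add (hCu x) (hCv x))
  have hbddA : BddAbove (Set.range w) :=
    ⟨C, by rintro _ ⟨x, rfl⟩; exact (le_abs_self _).trans (hwb x)⟩
  set M : ℝ := sSup (Set.range w) with hMdef
  have hwM : ∀ x, w x ≤ M := fun x => le_csSup hbddA ⟨x, rfl⟩
  have hMpos : 0 < M := lt_of_lt_of_le (sub_pos.mpr hx₁) (hwM x₁)
  have hwout : ∀ x, x ∉ Ω → w x ≤ 0 := fun x hx => sub_nonpos.mpr (hbdry x hx)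
  -- integrability of bounded measurable functions on balls
  have hintgen : ∀ (f : EuclideanSpace ℝ (Fin N) → ℝ) (D : ℝ), Measurable f →
      (∀ x, |f x| ≤ D) → ∀ (x : EuclideanSpace ℝ (Fin N)), IntegrableOn f (ball x ε) := by
    intro f D hf hfb x
    refine Integrable.mono'
      ((integrableOn_const measure_ball_lt_top.ne :
        IntegrableOn (fun _ => D) (ball x ε) volume)) hf.aestronglyMeasurable ?_
    filter_upwards with y using by simpa [Real.norm_eq_abs] using hfb y
  have hintw : ∀ x, IntegrableOn w (ball x ε) := hintgen w C hwmeas hwb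
  have hintu : ∀ x, IntegrableOn u (ball x ε) := hintgen u Cu humeas hCu
  have hintv : ∀ x, IntegrableOn v (ball x ε) := hintgen v Cv hvmeas hCv
  -- volume of balls
  have hVpos : ∀ x : EuclideanSpace ℝ (Fin N), 0 < (volume (ball x ε)).toReal :=
    fun x => ENNReal.toReal_pos (measure_ball_pos _ _ hε).ne' measure_ball_lt_top.ne
  -- the average function h
  set h : EuclideanSpace ℝ (Fin N) → ℝ := fun x => ⨍ y in ball x ε, w y with hhdef
  have havg : ∀ x, h x = (volume (ball x ε)).toReal⁻¹ * ∫ y in ball x ε, w y := by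
    intro x
    show (⨍ y in ball x ε, w y) = _
    rw [setAverage_eq volume w (ball x ε), smul_eq_mul]
    rfl
  have hconth : Continuous h := by
    have hvol : ∀ x : EuclideanSpace ℝ (Fin N), volume (ball x ε) = volume (ball (0 : EuclideanSpace ℝ (Fin N)) ε) :=
      fun x => Measure.addHaar_ball_center volume x ε
    have : h = fun x => (volume (ball (0 : EuclideanSpace ℝ (Fin N)) ε)).toReal⁻¹ *
        ∫ y in ball x ε, w y := by
      funext x; rw [havg x, hvol x]
    rw [this]
    exact continuous_const.mul (ball_int_cont hN ε hε w hwmeas C hwb)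
  -- h ≤ M
  have hhleM : ∀ x, h x ≤ M := by
    intro x
    rw [havg x]
    have h1 : (∫ y in ball x ε, w y) ≤ ∫ _ in ball x ε, M :=
      setIntegral_mono (hintw x)
        (integrableOn_const measure_ball_lt_top.ne) hwM
    rw [setIntegral_const, smul_eq_mul] at h1
    have hV := hVpos x
    calc (volume (ball x ε)).toReal⁻¹ * ∫ y in ball x ε, w y
        ≤ (volume (ball x ε)).toReal⁻¹ * ((volume (ball x ε)).toReal * M) := by
          exact mul_le_mul_of_nonneg_left h1 (by positivity)
      _ = M := by field_simp
  -- the key estimate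
  have hkey : ∀ x ∈ Ω, w x ≤ α * M + β * h x := by
    intro x hxΩ
    have hbne : (ball x ε).Nonempty := ⟨x, mem_ball_self hε⟩
    have hbneim : (u '' ball x ε).Nonempty := hbne.image u
    have hbneim' : (v '' ball x ε).Nonempty := hbne.image v
    have hbdu : BddAbove (u '' ball x ε) :=
      ⟨Cu, by rintro _ ⟨y, _, rfl⟩; exact (le_abs_self _).trans (hCu y)⟩
    have hbdv : BddAbove (v '' ball x ε) :=
      ⟨Cv, by rintro _ ⟨y, _, rfl⟩; exact (le_abs_self _).trans (hCv y)⟩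
    have hbdu' : BddBelow (u '' ball x ε) :=
      ⟨-Cu, by rintro _ ⟨y, _, rfl⟩; exact neg_le_of_abs_le (hCu y)⟩
    have hbdv' : BddBelow (v '' ball x ε) :=
      ⟨-Cv, by rintro _ ⟨y, _, rfl⟩; exact neg_le_of_abs_le (hCv y)⟩
    -- sSup comparison
    have hS : sSup (u '' ball x ε) ≤ sSup (v '' ball x ε) + M := by
      refine csSup_le hbneim ?_
      rintro _ ⟨y, hy, rfl⟩
      have : u y = v y + w y := by simp [hwdef]
      rw [this]
      exact add_le_add (le_csSup hbdv ⟨y, hy, rfl⟩) (hwM y)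
    -- sInf comparison
    have hI : sInf (u '' ball x ε) ≤ sInf (v '' ball x ε) + M := by
      rw [← sub_le_iff_le_add]
      refine le_csInf hbneim' ?_
      rintro _ ⟨y, hy, rfl⟩
      rw [sub_le_iff_le_add]
      have h1 : sInf (u '' ball x ε) ≤ u y := csInf_le hbdu' ⟨y, hy, rfl⟩
      have h2 : u y = v y + w y := by simp [hwdef]
      have := hwM y
      linarith
    -- averages
    have hAvg : (⨍ y in ball x ε, u y) - (⨍ y in ball x ε, v y) = h x := by
      rw [havg x, setAverage_eq volume u (ball x ε), setAverage_eq volume v (ball x ε), smul_eq_mul,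
        smul_eq_mul, ← mul_sub, ← integral_sub (hintu x) (hintv x)]
      rfl
    have hu := humvp x hxΩ
    have hv := hvmvp x hxΩ
    have heq : w x = α / 2 * (sSup (u '' ball x ε) + sInf (u '' ball x ε))
        + β * (⨍ y in ball x ε, u y)
        - (α / 2 * (sSup (v '' ball x ε) + sInf (v '' ball x ε))
          + β * ⨍ y in ball x ε, v y) := by
      rw [show w x = u x - v x from rfl, hu, hv]
    have t1 : α / 2 * (sSup (u '' ball x ε) - sSup (v '' ball x ε)) ≤ α / 2 * M :=
      mul_le_mul_of_nonneg_left (by linarith) (by linarith)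
    have t2 : α / 2 * (sInf (u '' ball x ε) - sInf (v '' ball x ε)) ≤ α / 2 * M :=
      mul_le_mul_of_nonneg_left (by linarith) (by linarith)
    have hβh : β * ((⨍ y in ball x ε, u y) - ⨍ y in ball x ε, v y) = β * h x := by
      rw [hAvg]
    have hexp : w x = α / 2 * (sSup (u '' ball x ε) - sSup (v '' ball x ε))
        + α / 2 * (sInf (u '' ball x ε) - sInf (v '' ball x ε))
        + β * ((⨍ y in ball x ε, u y) - ⨍ y in ball x ε, v y) := by
      rw [heq]; ring
    rw [hexp, hβh]
    linarith [t1, t2]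
  -- maximize h on closure Ω
  have hcpt : IsCompact (closure Ω) := hΩb.isCompact_closure
  obtain ⟨x₀, hx₀cl, hx₀max⟩ :=
    hcpt.exists_isMaxOn (⟨x₁, subset_closure hx₁Ω⟩ : (closure Ω).Nonempty)
      hconth.continuousOn
  have hx₀M : h x₀ = M := by
    refine le_antisymm (hhleM x₀) ?_
    by_contra hlt
    push_neg at hlt
    set η : ℝ := min (β * (M - h x₀)) (M / 2) with hηdef
    have hη : 0 < η := lt_min (by nlinarith) (by linarith)
    obtain ⟨_, ⟨z, rfl⟩, hz⟩ := exists_lt_of_lt_csSup (Set.range_nonempty w)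
      (show M - η < M by linarith)
    have hzΩ : z ∈ Ω := by
      by_contra hzo
      have := hwout z hzo
      have : M - η ≥ M - M / 2 := by
        have : η ≤ M / 2 := min_le_right _ _
        linarith
      linarith [hwout z hzo]
    have hk := hkey z hzΩ
    have hhz : h z ≤ h x₀ := hx₀max (subset_closure hzΩ)
    have hηβ : η ≤ β * (M - h x₀) := min_le_left _ _
    -- w z > M - η and w z ≤ α M + β h z ≤ α M + β h x₀ = M - β(M - h x₀) ≤ M - η
    nlinarith
  -- propagation: h = M on each ε-ball around a point where h = M
  have hprop : ∀ x₀ : EuclideanSpace ℝ (Fin N), h x₀ = M → ∀ y ∈ ball x₀ ε, h y = M := by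
    intro x₂ hx₂ y hy
    -- w = M a.e. on ball x₂ ε
    have hae : ∀ᵐ z ∂(volume.restrict (ball x₂ ε)), M - w z = 0 := by
      have hint2 : Integrable (fun z => M - w z) (volume.restrict (ball x₂ ε)) :=
        (integrableOn_const measure_ball_lt_top.ne).sub (hintw x₂)
      have hnn : 0 ≤ᵐ[volume.restrict (ball x₂ ε)] fun z => M - w z :=
        Filter.Eventually.of_forall fun z => sub_nonneg.mpr (hwM z)
      have hzero : (∫ z in ball x₂ ε, (M - w z)) = 0 := by
        rw [integral_sub (integrableOn_const (C := M) measure_ball_lt_top.ne) (hintw x₂),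
          setIntegral_const, smul_eq_mul, measureReal_def]
        have := havg x₂
        rw [hx₂] at this
        have hV := hVpos x₂
        field_simp at this
        linarith [this]
      have := (integral_eq_zero_iff_of_nonneg_ae hnn hint2).mp hzero
      filter_upwards [this] with z hz using hz
    -- a.e. point of the ball satisfies h = M
    have haeh : ∀ᵐ z ∂(volume.restrict (ball x₂ ε)), h z = M := by
      filter_upwards [hae] with z hz
      have hwz : w z = M := by linarith
      have hzΩ : z ∈ Ω := by
        by_contra hzo
        have := hwout z hzo
        rw [hwz] at this
        linarith
      have hk := hkey z hzΩ
      rw [hwz] at hk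
      have : M ≤ h z := by nlinarith
      exact le_antisymm (hhleM z) this
    -- h continuous and = M a.e. on an open set ⇒ = M on the set
    by_contra hne
    set U : Set (EuclideanSpace ℝ (Fin N)) := {z | h z ≠ M} ∩ ball x₂ ε with hUdef
    have hUopen : IsOpen U :=
      ((isOpen_ne_fun hconth continuous_const)).inter isOpen_ball
    have hUne : U.Nonempty := ⟨y, hne, hy⟩
    have hU0 : volume U = 0 := by
      have := ae_iff.mp haeh
      rwa [Measure.restrict_apply' measurableSet_ball] at this
    exact (hUopen.measure_pos volume hUne).ne' hU0
  -- the set {h = M} is clopen and nonempty, hence everything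
  set E : Set (EuclideanSpace ℝ (Fin N)) := {x | h x = M} with hEdef
  have hEclosed : IsClosed E := isClosed_eq hconth continuous_const
  have hEopen : IsOpen E := by
    rw [Metric.isOpen_iff]
    intro x hx
    exact ⟨ε, hε, fun y hy => hprop x hx y hy⟩
  have hEuniv : E = Set.univ := IsClopen.eq_univ ⟨hEclosed, hEopen⟩ ⟨x₀, hx₀M⟩
  -- contradiction at a far away point
  obtain ⟨R, hR⟩ := hΩb.subset_closedBall 0
  set R' : ℝ := max R 0 with hR'def
  have hR'0 : (0:ℝ) ≤ R' := le_max_right R 0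
  obtain ⟨z, hznorm⟩ := far_point hN (R' + ε + 1) (by positivity)
  have hdisj : ∀ y ∈ ball z ε, y ∉ Ω := by
    intro y hy hyΩ
    have h1 : dist y 0 ≤ R := mem_closedBall.mp (hR hyΩ)
    have h2 : dist y z < ε := mem_ball.mp hy
    have h3 : dist z 0 ≤ dist z y + dist y 0 := dist_triangle _ _ _
    have h4 : dist z 0 = R' + ε + 1 := by
      rw [dist_zero_right, hznorm]
    have h5 : R ≤ R' := le_max_left _ _
    rw [dist_comm] at h2
    linarith
  have hhz : h z ≤ 0 := by
    rw [havg z]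
    have h1 : (∫ y in ball z ε, w y) ≤ 0 :=
      setIntegral_nonpos measurableSet_ball (fun y hy => hwout y (hdisj y hy))
    have := hVpos z
    have h2 : (0:ℝ) ≤ (volume (ball z ε)).toReal⁻¹ := by positivity
    nlinarith
  have : h z = M := by
    have : z ∈ E := hEuniv ▸ Set.mem_univ z
    exact this
  linarith
end
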